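/- arXiv:2405.07757 — 3 statements merged into one kernel-verified Lean document; each statement's English description precedes it below -/
import Mathlib

section
/- For every p ∈ ℕ and s ∈ [p], there exists a finite subset N of the Euclidean unit sphere S^{p−1} ⊂ ℝᵖ, each of whose elements has at most s non-zero entries, with cardinality |N| ≤ binomial(p,s)·9^s, such that for every symmetric matrix A ∈ ℝ^{p×p}, λ_max^s(A) ≤ 2·max_{v∈N} |vᵀAv|. -/
open MeasureTheory ProbabilityTheory Real Matrix

noncomputable section

namespace CovCP

/-- The Orlicz `Ψ₂` (sub-Gaussian) norm of a real random variable. -/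
def psi2Norm {Ω : Type*} [MeasurableSpace Ω] (μ : Measure Ω) (Y : Ω → ℝ) : ℝ :=
  sInf {t : ℝ | 0 < t ∧ (∫ ω, Real.exp (Y ω ^ 2 / t ^ 2) ∂μ) ≤ 2}

/-- The Orlicz `Ψ₂` norm of an `ℝᵖ`-valued random vector. -/
def psi2NormVec {Ω : Type*} [MeasurableSpace Ω] {p : ℕ} (μ : Measure Ω)
    (X : Ω → Fin p → ℝ) : ℝ :=
  sSup {r : ℝ | ∃ v : Fin p → ℝ, (∑ j, v j ^ 2) = 1 ∧
    r = psi2Norm μ (fun ω => ∑ j, v j * X ω j)}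

/-- The law of `Y` under `μ` has a Lebesgue density bounded above by `w`. -/
def densityBoundedBy {Ω : Type*} [MeasurableSpace Ω] (μ : Measure Ω) (Y : Ω → ℝ)
    (w : ℝ) : Prop :=
  ∃ f : ℝ → ℝ, (∀ x, 0 ≤ f x) ∧ (∀ x, f x ≤ w) ∧
    μ.map Y = volume.withDensity fun x => ENNReal.ofReal (f x)

/-- The law of `Y` under `μ` has a continuous Lebesgue density bounded above by `w`. -/
def contDensityBoundedBy {Ω : Type*} [MeasurableSpace Ω] (μ : Measure Ω) (Y : Ω → ℝ)
    (w : ℝ) : Prop :=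
  ∃ f : ℝ → ℝ, Continuous f ∧ (∀ x, 0 ≤ f x) ∧ (∀ x, f x ≤ w) ∧
    μ.map Y = volume.withDensity fun x => ENNReal.ofReal (f x)

/-- Variance of a real random variable. -/
def rvVar {Ω : Type*} [MeasurableSpace Ω] (μ : Measure Ω) (Y : Ω → ℝ) : ℝ :=
  ∫ ω, (Y ω - ∫ ω', Y ω' ∂μ) ^ 2 ∂μ

/-- `log log (8 n)`. -/
def loglog8 (n : ℕ) : ℝ := Real.log (Real.log (8 * n))

/-- The geometric grid of candidate changepoint locations `{2^0, …, 2^⌊log₂(n/2)⌋}`. -/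
def Tgrid (n : ℕ) : Finset ℕ := (Finset.range (Nat.log 2 (n / 2) + 1)).image fun k => 2 ^ k

/-- The geometric grid of candidate sparsities `{2^0, …, 2^⌊log₂ p⌋}`. -/
def Sgrid (p : ℕ) : Finset ℕ := (Finset.range (Nat.log 2 p + 1)).image fun k => 2 ^ k

/-- Largest absolute `s`-sparse eigenvalue of a `p × p` real matrix. -/
def sparseEig {p : ℕ} (s : ℕ) (A : Matrix (Fin p) (Fin p) ℝ) : ℝ :=
  sSup {r : ℝ | ∃ v : Fin p → ℝ, (∑ j, v j ^ 2) = 1 ∧ {j | v j ≠ 0}.ncard ≤ s ∧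
    r = abs (v ⬝ᵥ A.mulVec v)}

/-- Operator norm of a `p × p` real matrix (as an operator on Euclidean space). -/
def matOpNorm {p : ℕ} (A : Matrix (Fin p) (Fin p) ℝ) : ℝ :=
  sSup {r : ℝ | ∃ v : Fin p → ℝ, (∑ j, v j ^ 2) = 1 ∧
    r = Real.sqrt (∑ i, A.mulVec v i ^ 2)}

/-- Largest eigenvalue of a symmetric matrix, `sup_{‖v‖ = 1} vᵀ M v`. -/
def lamMaxSym {p : ℕ} (M : Matrix (Fin p) (Fin p) ℝ) : ℝ :=
  sSup {r : ℝ | ∃ v : Fin p → ℝ, (∑ j, v j ^ 2) = 1 ∧ r = v ⬝ᵥ M.mulVec v}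

/-- Semidefinite-programming relaxation of the largest absolute `s`-sparse eigenvalue. -/
def sdpEig {p : ℕ} (s : ℕ) (A : Matrix (Fin p) (Fin p) ℝ) : ℝ :=
  sSup {r : ℝ | ∃ Z : Matrix (Fin p) (Fin p) ℝ, Z.PosSemidef ∧ Z.trace = 1 ∧
    (∑ i, ∑ j, abs (Z i j)) ≤ (s : ℝ) ∧ r = abs (A * Z).trace}

/-- Assumption 1 of the paper (univariate data). -/
structure Assumption1 (n : ℕ) (w u : ℝ) (μ : Measure (Fin n → ℝ)) : Prop where
  prob : IsProbabilityMeasure μ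
  indep : iIndepFun (m := fun _ : Fin n => (inferInstance : MeasurableSpace ℝ)) (fun i ω => ω i) μ
  meanZero : ∀ i, (∫ ω, ω i ∂μ) = 0
  density : ∀ i, densityBoundedBy μ (fun ω => ω i / Real.sqrt (∫ ω', ω' i ^ 2 ∂μ)) w
  subGauss : ∀ i, psi2Norm μ (fun ω => ω i) ^ 2 ≤ u * ∫ ω, ω i ^ 2 ∂μ

/-- Covariance matrix of the coordinates of a measure on `ℝⁿ`. -/
def covMatrix {n : ℕ} (μ : Measure (Fin n → ℝ)) : Matrix (Fin n) (Fin n) ℝ :=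
  Matrix.of fun i j => ∫ ω, (ω i - ∫ ω', ω' i ∂μ) * (ω j - ∫ ω', ω' j ∂μ) ∂μ

/-- Null-hypothesis parameter space, univariate case. -/
def Theta0Uni (n : ℕ) (σ : ℝ) : Set (Matrix (Fin n) (Fin n) ℝ) :=
  {σ ^ 2 • (1 : Matrix (Fin n) (Fin n) ℝ)}

/-- Alternative-hypothesis parameter space, univariate case. -/
def ThetaUni (n : ℕ) (ρ : ℝ) : Set (Matrix (Fin n) (Fin n) ℝ) :=
  {V | ∃ t0 : ℕ, 1 ≤ t0 ∧ t0 ≤ n - 1 ∧ ∃ s1 s2 : ℝ, 0 < s1 ∧ 0 < s2 ∧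
    V = Matrix.diagonal (fun i : Fin n => if (i : ℕ) < t0 then s1 else s2) ∧
    min (t0 : ℝ) ((n : ℝ) - t0) *
      min (|s1 - s2| / min s1 s2) ((|s1 - s2| / min s1 s2) ^ 2) = ρ}

/-- Null-hypothesis class of distributions, univariate case. -/
def P0Uni (n : ℕ) (w u σ : ℝ) : Set (Measure (Fin n → ℝ)) :=
  {μ | Assumption1 n w u μ ∧ covMatrix μ ∈ Theta0Uni n σ}

/-- Alternative-hypothesis class of distributions, univariate case. -/
def PUni (n : ℕ) (w u ρ : ℝ) : Set (Measure (Fin n → ℝ)) :=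
  {μ | Assumption1 n w u μ ∧ covMatrix μ ∈ ThetaUni n ρ}

/-- Minimax testing error, univariate case. -/
def minimaxErrorUni (n : ℕ) (σ w u ρ : ℝ) : ℝ :=
  ⨅ ψ : {ψ : (Fin n → ℝ) → ℝ // Measurable ψ ∧ ∀ x, ψ x = 0 ∨ ψ x = 1},
    ((⨆ μ' ∈ P0Uni n w u σ, ∫ x, ψ.1 x ∂μ') +
      ⨆ μ' ∈ PUni n w u ρ, ∫ x, (1 - ψ.1 x) ∂μ')

/-- Empirical variance of the first `t` observations. -/
def sigHat1 {n : ℕ} (t : ℕ) (x : Fin n → ℝ) : ℝ :=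
  (t : ℝ)⁻¹ * ∑ i ∈ Finset.univ.filter (fun i : Fin n => (i : ℕ) < t), x i ^ 2

/-- Empirical variance of the last `t` observations. -/
def sigHat2 {n : ℕ} (t : ℕ) (x : Fin n → ℝ) : ℝ :=
  (t : ℝ)⁻¹ * ∑ i ∈ Finset.univ.filter (fun i : Fin n => n - t ≤ (i : ℕ)), x i ^ 2

/-- The variance-ratio statistic `S_t`. -/
def SstatUni {n : ℕ} (t : ℕ) (x : Fin n → ℝ) : ℝ :=
  max (sigHat1 t x / sigHat2 t x) (sigHat2 t x / sigHat1 t x) - 1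

/-- The univariate changepoint test `ψ_λ`. -/
def psiUni (n : ℕ) (lam : ℝ) : (Fin n → ℝ) → ℝ :=
  Set.indicator {x | ∃ t ∈ Tgrid n,
    lam * max (Real.sqrt (loglog8 n / t)) (loglog8 n / t) < SstatUni t x} 1

/-- Assumption 2 of the paper (multivariate data). -/
structure Assumption2 (p n : ℕ) (u : ℝ) (μ : Measure (Fin n → Fin p → ℝ)) : Prop where
  prob : IsProbabilityMeasure μ
  indep : iIndepFun (m := fun _ : Fin n => (inferInstance : MeasurableSpace (Fin p → ℝ)))
    (fun i ω => ω i) μ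
  meanZero : ∀ i j, (∫ ω, ω i j ∂μ) = 0
  subGauss : ∀ i, psi2NormVec μ (fun ω => ω i) ^ 2 ≤
    u * matOpNorm (Matrix.of fun a b => ∫ ω, ω i a * ω i b ∂μ)

/-- Assumption 3 of the paper. -/
structure Assumption3 (p n : ℕ) (w u : ℝ) (μ : Measure (Fin n → Fin p → ℝ)) : Prop where
  prob : IsProbabilityMeasure μ
  indep : iIndepFun (m := fun _ : Fin n => (inferInstance : MeasurableSpace (Fin p → ℝ)))
    (fun i ω => ω i) μ
  meanZero : ∀ i j, (∫ ω, ω i j ∂μ) = 0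
  density : ∀ (i : Fin n) (v : Fin p → ℝ), (∑ j, v j ^ 2) = 1 →
    contDensityBoundedBy μ
      (fun ω => (∑ j, v j * ω i j) / Real.sqrt (∫ ω', (∑ j, v j * ω' i j) ^ 2 ∂μ)) w
  subGauss : ∀ (i : Fin n) (v : Fin p → ℝ), (∑ j, v j ^ 2) = 1 →
    psi2Norm μ (fun ω => ∑ j, v j * ω i j) ^ 2 ≤ u * ∫ ω, (∑ j, v j * ω i j) ^ 2 ∂μ

/-- Covariance matrix of the `i`-th observation. -/
def blockCov {p n : ℕ} (μ : Measure (Fin n → Fin p → ℝ)) (i : Fin n) :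
    Matrix (Fin p) (Fin p) ℝ :=
  Matrix.of fun a b => ∫ ω, (ω i a - ∫ ω', ω' i a ∂μ) * (ω i b - ∫ ω', ω' i b ∂μ) ∂μ

/-- Covariance matrix of the stacked vector `X = (X₁ᵀ, …, Xₙᵀ)ᵀ`. -/
def fullCov {p n : ℕ} (μ : Measure (Fin n → Fin p → ℝ)) :
    Matrix (Fin n × Fin p) (Fin n × Fin p) ℝ :=
  Matrix.of fun x y =>
    ∫ ω, (ω x.1 x.2 - ∫ ω', ω' x.1 x.2 ∂μ) * (ω y.1 y.2 - ∫ ω', ω' y.1 y.2 ∂μ) ∂μ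

/-- Block-diagonal `pn × pn` matrix with `p × p` diagonal blocks `B 0, …, B (n-1)`. -/
def blockDiag {p n : ℕ} (B : Fin n → Matrix (Fin p) (Fin p) ℝ) :
    Matrix (Fin n × Fin p) (Fin n × Fin p) ℝ :=
  Matrix.of fun x y => if x.1 = y.1 then B x.1 x.2 y.2 else 0

/-- Null-hypothesis parameter space, multivariate case. -/
def Theta0Multi (p n : ℕ) (σ : ℝ) : Set (Matrix (Fin n × Fin p) (Fin n × Fin p) ℝ) :=
  {V | ∃ M0 : Matrix (Fin p) (Fin p) ℝ, M0.PosDef ∧ matOpNorm M0 = σ ^ 2 ∧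
    V = blockDiag fun _ : Fin n => M0}

/-- Alternative-hypothesis parameter space, multivariate case. -/
def ThetaMulti (p n s : ℕ) (σ ρ : ℝ) : Set (Matrix (Fin n × Fin p) (Fin n × Fin p) ℝ) :=
  {V | ∃ t0 : ℕ, 1 ≤ t0 ∧ t0 ≤ n - 1 ∧ ∃ M1 M2 : Matrix (Fin p) (Fin p) ℝ,
    M1.PosDef ∧ M2.PosDef ∧ max (matOpNorm M1) (matOpNorm M2) ≤ σ ^ 2 ∧
    sparseEig s (M1 - M2) = matOpNorm (M1 - M2) ∧
    V = blockDiag (fun i : Fin n => if (i : ℕ) < t0 then M1 else M2) ∧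
    min (t0 : ℝ) ((n : ℝ) - t0) *
      min (matOpNorm (M1 - M2) / (σ ^ 2 - matOpNorm (M1 - M2)))
        ((matOpNorm (M1 - M2) / (σ ^ 2 - matOpNorm (M1 - M2))) ^ 2) = ρ}

/-- Null-hypothesis class of distributions, multivariate case. -/
def P0Multi (p n : ℕ) (u σ : ℝ) : Set (Measure (Fin n → Fin p → ℝ)) :=
  {μ | Assumption2 p n u μ ∧ fullCov μ ∈ Theta0Multi p n σ}

/-- Alternative-hypothesis class of distributions, multivariate case. -/
def PMulti (p n s : ℕ) (u σ ρ : ℝ) : Set (Measure (Fin n → Fin p → ℝ)) :=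
  {μ | Assumption2 p n u μ ∧ fullCov μ ∈ ThetaMulti p n s σ ρ}

/-- Minimax testing error, multivariate case. -/
def minimaxErrorMulti (p n s : ℕ) (u σ ρ : ℝ) : ℝ :=
  ⨅ ψ : {ψ : (Fin n → Fin p → ℝ) → ℝ // Measurable ψ ∧ ∀ x, ψ x = 0 ∨ ψ x = 1},
    ((⨆ μ' ∈ P0Multi p n u σ, ∫ x, ψ.1 x ∂μ') +
      ⨆ μ' ∈ PMulti p n s u σ ρ, ∫ x, (1 - ψ.1 x) ∂μ')

/-- Empirical covariance matrix of the first `t` observations. -/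
def hatSigma1 {p n : ℕ} (t : ℕ) (x : Fin n → Fin p → ℝ) : Matrix (Fin p) (Fin p) ℝ :=
  Matrix.of fun a b =>
    (t : ℝ)⁻¹ * ∑ i ∈ Finset.univ.filter (fun i : Fin n => (i : ℕ) < t), x i a * x i b

/-- Empirical covariance matrix of the last `t` observations. -/
def hatSigma2 {p n : ℕ} (t : ℕ) (x : Fin n → Fin p → ℝ) : Matrix (Fin p) (Fin p) ℝ :=
  Matrix.of fun a b =>
    (t : ℝ)⁻¹ * ∑ i ∈ Finset.univ.filter (fun i : Fin n => n - t ≤ (i : ℕ)), x i a * x i b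

/-- The statistic `S_{t,s}`. -/
def Sts {p n : ℕ} (t s : ℕ) (x : Fin n → Fin p → ℝ) : ℝ :=
  sparseEig s (hatSigma1 t x - hatSigma2 t x)

/-- The rate function `γ(p,n,s) = max(s log(ep/s), log log(8n))`. -/
def gammaPNS (p n s : ℕ) : ℝ :=
  max ((s : ℝ) * Real.log (Real.exp 1 * p / s)) (loglog8 n)

/-- The rate function `r(p,n,s,t)`. -/
def rPNST (p n s t : ℕ) : ℝ :=
  max (Real.sqrt (gammaPNS p n s / t)) (gammaPNS p n s / t)

/-- The multivariate changepoint test `ψ_λ` with known sparsity and noise level. -/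
def psiMulti (p n s : ℕ) (lam σ : ℝ) : (Fin n → Fin p → ℝ) → ℝ :=
  Set.indicator {x | ∃ t ∈ Tgrid n, lam * σ ^ 2 * rPNST p n s t < Sts t s x} 1

/-- The noise-level estimate `σ̂²_s`. -/
def sigHatS {p n : ℕ} (s : ℕ) (x : Fin n → Fin p → ℝ) : ℝ :=
  min (sparseEig s (hatSigma1 (⌈gammaPNS p n s⌉₊) x))
    (sparseEig s (hatSigma2 (⌈gammaPNS p n s⌉₊) x))

/-- The adaptive multivariate changepoint test `ψ_{adaptive,λ}`. -/
def psiAdaptive (p n : ℕ) (lam : ℝ) : (Fin n → Fin p → ℝ) → ℝ :=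
  Set.indicator {x | ∃ t ∈ Tgrid n, ∃ s ∈ Sgrid p, gammaPNS p n s ≤ (n : ℝ) ∧
    lam * sigHatS s x * rPNST p n s t < Sts t s x} 1

/-- The statistic `Ŝ_{t,s}` based on the SDP relaxation. -/
def ShatTS {p n : ℕ} (t s : ℕ) (x : Fin n → Fin p → ℝ) : ℝ :=
  sdpEig s (hatSigma1 t x - hatSigma2 t x)

/-- The rate function `β(p,n) = max(log(ep), log log(8n))`. -/
def betaPN (p n : ℕ) : ℝ := max (Real.log (Real.exp 1 * p)) (loglog8 n)

/-- The rate function `h(p,n,s,t)`. -/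
def hPNST (p n s t : ℕ) : ℝ :=
  (s : ℝ) * max (Real.sqrt (betaPN p n / t)) (betaPN p n / t)

/-- The noise-level estimate `σ̂²_con`. -/
def sigHatCon {p n : ℕ} (x : Fin n → Fin p → ℝ) : ℝ :=
  min (sdpEig 1 (hatSigma1 (⌈Real.log (Real.exp 1 * p)⌉₊) x))
    (sdpEig 1 (hatSigma2 (⌈Real.log (Real.exp 1 * p)⌉₊) x))

/-- The computationally tractable adaptive test `ψ̂_{adaptive,λ}`. -/
def psiHatAdaptive (p n : ℕ) (lam : ℝ) : (Fin n → Fin p → ℝ) → ℝ :=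
  Set.indicator {x | ∃ t ∈ Tgrid n, ∃ s ∈ Sgrid p,
    lam * sigHatCon x * hPNST p n s t < ShatTS t s x} 1

/-- Density of the centered multivariate Gaussian distribution `N(0, M)`. -/
def gaussDensity {d : Type*} [Fintype d] [DecidableEq d] (M : Matrix d d ℝ)
    (x : d → ℝ) : ℝ :=
  (2 * Real.pi) ^ (-(Fintype.card d : ℝ) / 2) * M.det ^ (-(1 : ℝ) / 2) *
    Real.exp (-(1 / 2) * (x ⬝ᵥ M⁻¹.mulVec x))

section SparseNetAux

open Metric

lemma packing_bound (s : ℕ) (hs : 1 ≤ s) (T : Finset (EuclideanSpace ℝ (Fin s)))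
    (hT : ∀ x ∈ T, ‖x‖ = 1)
    (hsep : ∀ x ∈ T, ∀ y ∈ T, x ≠ y → 1/4 ≤ dist x y) :
    T.card ≤ 9 ^ s := by
  haveI : Nonempty (Fin s) := ⟨⟨0, hs⟩⟩
  set B : ENNReal := volume (ball (0:EuclideanSpace ℝ (Fin s)) 1) with hB
  have hB0 : B ≠ 0 := (measure_ball_pos _ _ one_pos).ne'
  have hBt : B ≠ ⊤ := measure_ball_lt_top.ne
  have hball : ∀ (x : EuclideanSpace ℝ (Fin s)) (r : ℝ), 0 ≤ r → volume (ball x r) = ENNReal.ofReal (r ^ s) * B := by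
    intro x r hr
    rw [Measure.addHaar_ball volume x hr, finrank_euclideanSpace_fin]
  have hdisj : (T : Set (EuclideanSpace ℝ (Fin s))).PairwiseDisjoint (fun x => ball x (1/8)) := by
    intro x hx y hy hxy
    exact Metric.ball_disjoint_ball (by linarith [hsep x (Finset.mem_coe.mp hx) y (Finset.mem_coe.mp hy) hxy])
  have hmeas := measure_biUnion_finset (μ := volume) hdisj (fun x _ => measurableSet_ball)
  have hsub : (⋃ x ∈ T, ball x (1/8)) ⊆ ball (0:EuclideanSpace ℝ (Fin s)) (9/8) := by
    intro z hz
    simp only [Set.mem_iUnion] at hz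
    obtain ⟨x, hx, hzx⟩ := hz
    have hx1 : dist x 0 = 1 := by rw [dist_zero_right]; exact hT x hx
    rw [mem_ball] at hzx ⊢
    calc dist z 0 ≤ dist z x + dist x 0 := dist_triangle _ _ _
      _ < 9/8 := by rw [hx1]; linarith
  have key : (T.card : ENNReal) * (ENNReal.ofReal ((1/8 : ℝ) ^ s) * B) ≤
      ENNReal.ofReal ((9/8 : ℝ) ^ s) * B := by
    calc (T.card : ENNReal) * (ENNReal.ofReal ((1/8 : ℝ) ^ s) * B)
        = ∑ x ∈ T, volume (ball x (1/8)) := by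
          rw [Finset.sum_congr rfl fun x _ => hball x (1/8) (by norm_num)]
          simp [Finset.sum_const, nsmul_eq_mul]
      _ = volume (⋃ x ∈ T, ball x (1/8)) := hmeas.symm
      _ ≤ volume (ball (0:EuclideanSpace ℝ (Fin s)) (9/8)) := measure_mono hsub
      _ = ENNReal.ofReal ((9/8 : ℝ) ^ s) * B := hball 0 (9/8) (by norm_num)
  have h98 : ENNReal.ofReal ((9/8 : ℝ) ^ s) = ENNReal.ofReal ((9:ℝ) ^ s) * ENNReal.ofReal ((1/8:ℝ) ^ s) := by
    rw [← ENNReal.ofReal_mul (by positivity)]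
    congr 1
    rw [← mul_pow]; norm_num
  rw [h98] at key
  have hne : ENNReal.ofReal ((1/8:ℝ) ^ s) * B ≠ 0 := by
    simp only [ne_eq, mul_eq_zero, ENNReal.ofReal_eq_zero, not_or, not_le]
    exact ⟨by positivity, hB0⟩
  have hnet : ENNReal.ofReal ((1/8:ℝ) ^ s) * B ≠ ⊤ := ENNReal.mul_ne_top ENNReal.ofReal_ne_top hBt
  have key' : (T.card : ENNReal) * (ENNReal.ofReal ((1/8:ℝ)^s) * B) ≤
      ENNReal.ofReal ((9:ℝ)^s) * (ENNReal.ofReal ((1/8:ℝ)^s) * B) := by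
    calc (T.card : ENNReal) * (ENNReal.ofReal ((1/8:ℝ)^s) * B)
        = (T.card : ENNReal) * (ENNReal.ofReal ((1/8:ℝ)^s) * B) := rfl
      _ ≤ ENNReal.ofReal ((9:ℝ)^s) * ENNReal.ofReal ((1/8:ℝ)^s) * B := by
          exact key
      _ = _ := by rw [mul_assoc]
  rw [mul_comm (T.card : ENNReal) _, mul_comm (ENNReal.ofReal ((9:ℝ)^s)) _] at key'
  have key2 : (T.card : ENNReal) ≤ ENNReal.ofReal ((9:ℝ) ^ s) :=
    (ENNReal.mul_le_mul_iff_right hne hnet).mp key'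
  have : ENNReal.ofReal ((9:ℝ) ^ s) = ((9 ^ s : ℕ) : ENNReal) := by
    rw [ENNReal.ofReal_pow (by norm_num)]
    norm_num
  rw [this, Nat.cast_le] at key2
  exact key2

lemma net_exists (s : ℕ) (hs : 1 ≤ s) :
    ∃ N₀ : Finset (EuclideanSpace ℝ (Fin s)),
      N₀.card ≤ 9 ^ s ∧ (∀ y ∈ N₀, ‖y‖ = 1) ∧
      ∀ x : EuclideanSpace ℝ (Fin s), ‖x‖ = 1 → ∃ y ∈ N₀, dist x y ≤ 1/4 := by
  classical
  set P : Set ℕ := {k | ∃ T : Finset (EuclideanSpace ℝ (Fin s)),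
    ((∀ x ∈ T, ‖x‖ = 1) ∧ ∀ x ∈ T, ∀ y ∈ T, x ≠ y → 1/4 ≤ dist x y) ∧ T.card = k} with hPdef
  have hP0 : (0:ℕ) ∈ P := ⟨∅, ⟨by simp, by simp⟩, rfl⟩
  have hPb : BddAbove P := ⟨9 ^ s, fun k hk => by
    obtain ⟨T, hT, rfl⟩ := hk
    exact packing_bound s hs T hT.1 hT.2⟩
  obtain ⟨T, hT, hTcard⟩ := Nat.sSup_mem ⟨0, hP0⟩ hPb
  refine ⟨T, ?_, hT.1, ?_⟩
  · rw [hTcard]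
    exact csSup_le ⟨0, hP0⟩ fun k hk => by
      obtain ⟨T', hT', rfl⟩ := hk
      exact packing_bound s hs T' hT'.1 hT'.2
  · intro x hx
    by_contra hcon
    push_neg at hcon
    have hxT : x ∉ T := fun hxT => by linarith [hcon x hxT, dist_self x]
    have hins : ((∀ z ∈ insert x T, ‖z‖ = 1) ∧
        ∀ z ∈ insert x T, ∀ y ∈ insert x T, z ≠ y → 1/4 ≤ dist z y) := by
      constructor
      · intro z hz
        rcases Finset.mem_insert.mp hz with h | h
        · rw [h]; exact hx
        · exact hT.1 z h
      · intro z hz y hy hzy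
        rcases Finset.mem_insert.mp hz with h1 | h1 <;>
          rcases Finset.mem_insert.mp hy with h2 | h2
        · exact absurd (h1.trans h2.symm) hzy
        · rw [h1]; linarith [hcon y h2]
        · rw [h2, dist_comm]; linarith [hcon z h1]
        · exact hT.2 z h1 y h2 hzy
    have : T.card + 1 ∈ P := ⟨insert x T, hins, by rw [Finset.card_insert_of_notMem hxT]⟩
    have := le_csSup hPb this
    omega

lemma eucl_norm_sq (s : ℕ) (y : EuclideanSpace ℝ (Fin s)) : ‖y‖ = Real.sqrt (∑ i, y i ^ 2) := by
  rw [EuclideanSpace.norm_eq]; simp [sq_abs]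

lemma eucl_norm_one (s : ℕ) (y : EuclideanSpace ℝ (Fin s)) : ‖y‖ = 1 ↔ ∑ i, y i ^ 2 = 1 := by
  rw [eucl_norm_sq]
  constructor
  · intro h
    have h0 : 0 ≤ ∑ i, y i ^ 2 := Finset.sum_nonneg fun i _ => sq_nonneg _
    nlinarith [Real.sq_sqrt h0]
  · intro h; rw [h, Real.sqrt_one]

lemma eucl_dist_sq (s : ℕ) (x y : EuclideanSpace ℝ (Fin s)) (h : dist x y ≤ 1/4) :
    ∑ i, (x i - y i) ^ 2 ≤ 1/16 := by
  rw [EuclideanSpace.dist_eq] at h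
  simp only [Real.dist_eq] at h
  have h0 : 0 ≤ ∑ i, |x i - y i| ^ 2 := Finset.sum_nonneg fun i _ => sq_nonneg _
  have := Real.sq_sqrt h0
  have h2 : ∑ i, |x i - y i| ^ 2 ≤ 1/16 := by
    nlinarith [Real.sqrt_nonneg (∑ i, |x i - y i| ^ 2)]
  simpa [sq_abs] using h2

def embedVec (p s : ℕ) (S : Finset (Fin p)) (h : S.card = s) (x : Fin s → ℝ) : Fin p → ℝ :=
  fun j => if hj : j ∈ S then x ((S.orderIsoOfFin h).symm ⟨j, hj⟩) else 0

lemma embedVec_support {p s : ℕ} (S : Finset (Fin p)) (h : S.card = s) (x : Fin s → ℝ)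
    (j : Fin p) (hj : embedVec p s S h x j ≠ 0) : j ∈ S := by
  by_contra hjS
  exact hj (dif_neg hjS)

lemma embedVec_sum_sq {p s : ℕ} (S : Finset (Fin p)) (h : S.card = s) (x : Fin s → ℝ) :
    ∑ j, embedVec p s S h x j ^ 2 = ∑ i, x i ^ 2 := by
  classical
  rw [← Finset.sum_subset (Finset.subset_univ S)
    (fun j _ hj => by simp [embedVec, hj])]
  rw [← Finset.sum_coe_sort S (fun j => embedVec p s S h x j ^ 2)]
  have hval : ∀ a : {y // y ∈ S}, embedVec p s S h x a = x ((S.orderIsoOfFin h).symm a) := by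
    intro a
    simp only [embedVec, a.2, dif_pos]
  calc ∑ a : {y // y ∈ S}, embedVec p s S h x a ^ 2
      = ∑ a : {y // y ∈ S}, x ((S.orderIsoOfFin h).toEquiv.symm a) ^ 2 := by
        exact Finset.sum_congr rfl fun a _ => by rw [hval a]; rfl
    _ = ∑ i, x i ^ 2 := Equiv.sum_comp (S.orderIsoOfFin h).toEquiv.symm (fun i => x i ^ 2)

lemma embedVec_sub {p s : ℕ} (S : Finset (Fin p)) (h : S.card = s) (x y : Fin s → ℝ) :
    embedVec p s S h (x - y) = embedVec p s S h x - embedVec p s S h y := by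
  funext j
  by_cases hj : j ∈ S <;> simp [embedVec, hj]

lemma embedVec_section {p s : ℕ} (S : Finset (Fin p)) (h : S.card = s) (v : Fin p → ℝ)
    (hv : ∀ j, v j ≠ 0 → j ∈ S) :
    embedVec p s S h (fun i => v ((S.orderIsoOfFin h) i)) = v := by
  funext j
  by_cases hj : j ∈ S
  · simp only [embedVec, hj, dif_pos]
    congr 1
    have := (S.orderIsoOfFin h).apply_symm_apply ⟨j, hj⟩
    exact congrArg Subtype.val this
  · rw [embedVec, dif_neg hj]
    by_contra hne
    exact hj (hv j fun h0 => hne h0.symm)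

section MatAlg
variable {p : ℕ} (A : Matrix (Fin p) (Fin p) ℝ)

lemma dot_expand_add (x y : Fin p → ℝ) :
    (x + y) ⬝ᵥ A.mulVec (x + y) = x ⬝ᵥ A.mulVec x + x ⬝ᵥ A.mulVec y + y ⬝ᵥ A.mulVec x + y ⬝ᵥ A.mulVec y := by
  simp [Matrix.mulVec_add, add_dotProduct, dotProduct_add]; ring

lemma dot_expand_sub (x y : Fin p → ℝ) :
    (x - y) ⬝ᵥ A.mulVec (x - y) = x ⬝ᵥ A.mulVec x - x ⬝ᵥ A.mulVec y - y ⬝ᵥ A.mulVec x + y ⬝ᵥ A.mulVec y := by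
  simp [Matrix.mulVec_sub, sub_dotProduct, dotProduct_sub]; ring

lemma dot_smul_smul (c d : ℝ) (x y : Fin p → ℝ) :
    (c • x) ⬝ᵥ A.mulVec (d • y) = (c * d) * (x ⬝ᵥ A.mulVec y) := by
  simp [Matrix.mulVec_smul, smul_dotProduct, dotProduct_smul, smul_eq_mul]; ring

lemma dot_symm (hA : A.IsSymm) (x y : Fin p → ℝ) :
    x ⬝ᵥ A.mulVec y = y ⬝ᵥ A.mulVec x := by
  simp only [dotProduct, Matrix.mulVec, Finset.mul_sum]
  rw [Finset.sum_comm]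
  exact Finset.sum_congr rfl fun i _ => Finset.sum_congr rfl fun j _ => by
    rw [hA.apply i j]; ring

lemma mulVec_apply_eq (w : Fin p → ℝ) (i : Fin p) : A.mulVec w i = ∑ j, A i j * w j := rfl

end MatAlg

end SparseNetAux

set_option maxHeartbeats 1000000 in
/-- a sparse net for the `s`-sparse eigenvalue problem
(the covering claim in the proof of Lemma 2 of the paper). -/
theorem sparse_net (p s : ℕ) (hs : 1 ≤ s) (hsp : s ≤ p) :
    ∃ N : Finset (Fin p → ℝ),
      (∀ v ∈ N, (∑ j, v j ^ 2) = 1 ∧ {j | v j ≠ 0}.ncard ≤ s) ∧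
      N.card ≤ p.choose s * 9 ^ s ∧
      ∀ A : Matrix (Fin p) (Fin p) ℝ, A.IsSymm →
        sparseEig s A ≤ 2 * sSup ((fun v => abs (v ⬝ᵥ A.mulVec v)) '' ↑N) := by
  classical
  obtain ⟨N₀, hN₀card, hN₀unit, hN₀net⟩ := net_exists s hs
  set F : Finset (Fin p) → Finset (Fin p → ℝ) := fun S =>
    if h : S.card = s then N₀.image (fun y => embedVec p s S h (fun i => y i)) else ∅ with hF
  set N : Finset (Fin p → ℝ) := (Finset.univ.powersetCard s).biUnion F with hNdef
  -- membership characterization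
  have hmemN : ∀ v ∈ N, ∃ S : Finset (Fin p), ∃ h : S.card = s, ∃ y ∈ N₀,
      v = embedVec p s S h (fun i => y i) := by
    intro v hv
    obtain ⟨S, hS, hvS⟩ := Finset.mem_biUnion.mp hv
    have hScard : S.card = s := (Finset.mem_powersetCard.mp hS).2
    rw [hF] at hvS
    simp only [hScard, dif_pos] at hvS
    obtain ⟨y, hy, hyv⟩ := Finset.mem_image.mp hvS
    exact ⟨S, hScard, y, hy, hyv.symm⟩
  have hNprops : ∀ v ∈ N, (∑ j, v j ^ 2) = 1 ∧ {j | v j ≠ 0}.ncard ≤ s := by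
    intro v hv
    obtain ⟨S, h, y, hy, rfl⟩ := hmemN v hv
    constructor
    · rw [embedVec_sum_sq]
      exact (eucl_norm_one s y).mp (hN₀unit y hy)
    · have hsub : {j | embedVec p s S h (fun i => y i) j ≠ 0} ⊆ ↑S :=
        fun j hj => embedVec_support S h _ j hj
      calc {j | embedVec p s S h (fun i => y i) j ≠ 0}.ncard
          ≤ (↑S : Set (Fin p)).ncard := Set.ncard_le_ncard hsub S.finite_toSet
        _ = S.card := Set.ncard_coe_finset S
        _ = s := h
  have hNcard : N.card ≤ p.choose s * 9 ^ s := by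
    calc N.card ≤ ∑ S ∈ Finset.univ.powersetCard s, (F S).card := Finset.card_biUnion_le
      _ ≤ ∑ S ∈ Finset.univ.powersetCard s, 9 ^ s := by
          refine Finset.sum_le_sum fun S _ => ?_
          rw [hF]
          by_cases h : S.card = s
          · simp only [h, dif_pos]
            exact le_trans (Finset.card_image_le) hN₀card
          · simp [h]
      _ = p.choose s * 9 ^ s := by
          rw [Finset.sum_const, smul_eq_mul, Finset.card_powersetCard, Finset.card_univ,
            Fintype.card_fin]
  refine ⟨N, hNprops, hNcard, ?_⟩
  intro A hA
  set Kset : Set ℝ := (fun v => abs (v ⬝ᵥ A.mulVec v)) '' ↑N with hKset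
  set K : ℝ := sSup Kset with hK
  have hKbdd : BddAbove Kset := (N.finite_toSet.image _).bddAbove
  have hNne : N.Nonempty := by
    obtain ⟨S, -, hScard⟩ := Finset.exists_subset_card_eq
      (show s ≤ (Finset.univ : Finset (Fin p)).card by rw [Finset.card_univ, Fintype.card_fin]; exact hsp)
    have hx₀ : ‖EuclideanSpace.single (⟨0, hs⟩ : Fin s) (1:ℝ)‖ = 1 := by
      rw [EuclideanSpace.norm_single]; norm_num
    obtain ⟨y, hy, -⟩ := hN₀net _ hx₀
    refine ⟨embedVec p s S hScard (fun i => y i), Finset.mem_biUnion.mpr ⟨S, ?_, ?_⟩⟩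
    · exact Finset.mem_powersetCard.mpr ⟨Finset.subset_univ S, hScard⟩
    · rw [hF]
      simp only [hScard, dif_pos]
      exact Finset.mem_image.mpr ⟨y, hy, rfl⟩
  have hK0 : 0 ≤ K := by
    obtain ⟨v, hv⟩ := hNne
    exact le_trans (abs_nonneg _) (le_csSup hKbdd ⟨v, hv, rfl⟩)
  have hKle : ∀ u ∈ N, |u ⬝ᵥ A.mulVec u| ≤ K := fun u hu => le_csSup hKbdd ⟨u, hu, rfl⟩
  -- main bound
  rw [sparseEig]
  refine Real.sSup_le ?_ (by linarith)
  rintro r ⟨v, hv1, hvs, rfl⟩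
  -- extend the support of v to a set S of cardinality s
  set Tv : Finset (Fin p) := Finset.univ.filter (fun j => v j ≠ 0) with hTv
  have hTvcoe : (↑Tv : Set (Fin p)) = {j | v j ≠ 0} := by ext j; simp [hTv]
  have hTvcard : Tv.card ≤ s := by
    rw [← Set.ncard_coe_finset Tv, hTvcoe]; exact hvs
  obtain ⟨S, hTvS, hScard⟩ := Finset.exists_superset_card_eq hTvcard
    (by rw [Fintype.card_fin]; exact hsp)
  have hvS : ∀ j, v j ≠ 0 → j ∈ S := fun j hj => hTvS (by simp [hTv, hj])
  -- the sup of |Q| over unit vectors supported in S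
  set QS : Set ℝ := {r | ∃ w : Fin p → ℝ, (∑ j, w j ^ 2) = 1 ∧ (∀ j, w j ≠ 0 → j ∈ S) ∧
    r = |w ⬝ᵥ A.mulVec w|} with hQS
  set C : ℝ := ∑ i, ∑ j, |A i j| with hC
  have habs1 : ∀ w : Fin p → ℝ, (∑ j, w j ^ 2) = 1 → ∀ j, |w j| ≤ 1 := by
    intro w hw j
    have h1 : w j ^ 2 ≤ 1 := by
      rw [← hw]
      exact Finset.single_le_sum (fun i _ => sq_nonneg (w i)) (Finset.mem_univ j)
    nlinarith [abs_nonneg (w j), sq_abs (w j)]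
  have hQbdd : ∀ r ∈ QS, r ≤ C := by
    rintro r ⟨w, hw1, -, rfl⟩
    have h1 := habs1 w hw1
    calc |w ⬝ᵥ A.mulVec w| ≤ ∑ i, |w i * A.mulVec w i| := Finset.abs_sum_le_sum_abs _ _
      _ ≤ ∑ i, ∑ j, |A i j| := by
          refine Finset.sum_le_sum fun i _ => ?_
          rw [abs_mul, mulVec_apply_eq]
          calc |w i| * |∑ j, A i j * w j| ≤ 1 * ∑ j, |A i j * w j| :=
                mul_le_mul (h1 i) (Finset.abs_sum_le_sum_abs _ _) (abs_nonneg _) zero_le_one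
            _ = ∑ j, |A i j| * |w j| := by
                rw [one_mul]; exact Finset.sum_congr rfl fun j _ => abs_mul _ _
            _ ≤ ∑ j, |A i j| * 1 :=
                Finset.sum_le_sum fun j _ => mul_le_mul_of_nonneg_left (h1 j) (abs_nonneg _)
            _ = ∑ j, |A i j| := by simp
      _ = C := rfl
  have hQSbdd : BddAbove QS := ⟨C, fun r hr => hQbdd r hr⟩
  have hQSne : QS.Nonempty := ⟨|v ⬝ᵥ A.mulVec v|, v, hv1, hvS, rfl⟩
  set M : ℝ := sSup QS with hM
  have hM0 : 0 ≤ M := by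
    obtain ⟨r, w, hw1, hwS, rfl⟩ := hQSne
    exact le_trans (abs_nonneg _) (le_csSup hQSbdd ⟨w, hw1, hwS, rfl⟩)
  -- quadratic bound for vectors supported in S
  have hquad : ∀ x : Fin p → ℝ, (∀ j, x j ≠ 0 → j ∈ S) →
      |x ⬝ᵥ A.mulVec x| ≤ (∑ j, x j ^ 2) * M := by
    intro x hx
    by_cases hz : (∑ j, x j ^ 2) = 0
    · have hx0 : x = 0 := by
        funext j
        have := (Finset.sum_eq_zero_iff_of_nonneg (fun i _ => sq_nonneg (x i))).mp hz j
          (Finset.mem_univ j)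
        exact (pow_eq_zero_iff two_ne_zero).mp this
      rw [hx0]
      simp [zero_dotProduct, hz]
    · have hpos : 0 < ∑ j, x j ^ 2 :=
        lt_of_le_of_ne (Finset.sum_nonneg fun i _ => sq_nonneg _) (Ne.symm hz)
      set n : ℝ := Real.sqrt (∑ j, x j ^ 2) with hn
      have hnpos : 0 < n := Real.sqrt_pos.mpr hpos
      have hn2 : n ^ 2 = ∑ j, x j ^ 2 := Real.sq_sqrt hpos.le
      set u : Fin p → ℝ := n⁻¹ • x with hu
      have hu1 : ∑ j, u j ^ 2 = 1 := by
        rw [hu]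
        simp only [Pi.smul_apply, smul_eq_mul, mul_pow]
        rw [← Finset.mul_sum, ← hn2]
        field_simp
      have huS : ∀ j, u j ≠ 0 → j ∈ S := by
        intro j hj
        refine hx j fun h0 => hj ?_
        rw [hu]; simp [h0]
      have huM : |u ⬝ᵥ A.mulVec u| ≤ M := le_csSup hQSbdd ⟨u, hu1, huS, rfl⟩
      have hQx : x ⬝ᵥ A.mulVec x = n ^ 2 * (u ⬝ᵥ A.mulVec u) := by
        rw [hu, dot_smul_smul]
        field_simp
      rw [hQx, abs_mul, abs_of_nonneg (by positivity : (0:ℝ) ≤ n ^ 2), hn2]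
      exact mul_le_mul_of_nonneg_left huM (by positivity)
  -- bilinear bound
  have hbilin : ∀ w z : Fin p → ℝ, (∀ j, w j ≠ 0 → j ∈ S) → (∀ j, z j ≠ 0 → j ∈ S) →
      |w ⬝ᵥ A.mulVec z| ≤ Real.sqrt (∑ j, w j ^ 2) * Real.sqrt (∑ j, z j ^ 2) * M := by
    intro w z hwS hzS
    have hza : (0:ℝ) ≤ ∑ j, w j ^ 2 := Finset.sum_nonneg fun i _ => sq_nonneg _
    have hzb : (0:ℝ) ≤ ∑ j, z j ^ 2 := Finset.sum_nonneg fun i _ => sq_nonneg _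
    by_cases ha : (∑ j, w j ^ 2) = 0
    · have hw0 : w = 0 := by
        funext j
        exact (pow_eq_zero_iff two_ne_zero).mp
          ((Finset.sum_eq_zero_iff_of_nonneg (fun i _ => sq_nonneg (w i))).mp ha j
            (Finset.mem_univ j))
      rw [hw0, zero_dotProduct, abs_zero]
      positivity
    by_cases hb : (∑ j, z j ^ 2) = 0
    · have hz0 : z = 0 := by
        funext j
        exact (pow_eq_zero_iff two_ne_zero).mp
          ((Finset.sum_eq_zero_iff_of_nonneg (fun i _ => sq_nonneg (z i))).mp hb j
            (Finset.mem_univ j))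
      rw [hz0, Matrix.mulVec_zero, dotProduct_zero, abs_zero]
      positivity
    have hapos : 0 < ∑ j, w j ^ 2 := lt_of_le_of_ne hza (Ne.symm ha)
    have hbpos : 0 < ∑ j, z j ^ 2 := lt_of_le_of_ne hzb (Ne.symm hb)
    set sa : ℝ := Real.sqrt (∑ j, w j ^ 2) with hsa
    set sb : ℝ := Real.sqrt (∑ j, z j ^ 2) with hsb
    have hsapos : 0 < sa := Real.sqrt_pos.mpr hapos
    have hsbpos : 0 < sb := Real.sqrt_pos.mpr hbpos
    have hsa2 : sa ^ 2 = ∑ j, w j ^ 2 := Real.sq_sqrt hapos.le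
    have hsb2 : sb ^ 2 = ∑ j, z j ^ 2 := Real.sq_sqrt hbpos.le
    set c : ℝ := Real.sqrt (sb / sa) with hc
    have hcpos : 0 < c := Real.sqrt_pos.mpr (by positivity)
    have hc2 : c ^ 2 = sb / sa := Real.sq_sqrt (by positivity)
    set w' : Fin p → ℝ := c • w with hw'
    set z' : Fin p → ℝ := c⁻¹ • z with hz'
    have hw'S : ∀ j, w' j ≠ 0 → j ∈ S := by
      intro j hj
      refine hwS j fun h0 => hj ?_
      rw [hw']; simp [h0]
    have hz'S : ∀ j, z' j ≠ 0 → j ∈ S := by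
      intro j hj
      refine hzS j fun h0 => hj ?_
      rw [hz']; simp [h0]
    have haddS : ∀ j, (w' + z') j ≠ 0 → j ∈ S := by
      intro j hj
      by_contra hjS
      have h1 : w' j = 0 := by by_contra h; exact hjS (hw'S j h)
      have h2 : z' j = 0 := by by_contra h; exact hjS (hz'S j h)
      exact hj (by simp [h1, h2])
    have hsubS : ∀ j, (w' - z') j ≠ 0 → j ∈ S := by
      intro j hj
      by_contra hjS
      have h1 : w' j = 0 := by by_contra h; exact hjS (hw'S j h)
      have h2 : z' j = 0 := by by_contra h; exact hjS (hz'S j h)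
      exact hj (by simp [h1, h2])
    have heq : w' ⬝ᵥ A.mulVec z' = w ⬝ᵥ A.mulVec z := by
      rw [hw', hz', dot_smul_smul]
      rw [mul_inv_cancel₀ hcpos.ne', one_mul]
    have hpolar : 4 * (w' ⬝ᵥ A.mulVec z') =
        (w' + z') ⬝ᵥ A.mulVec (w' + z') - (w' - z') ⬝ᵥ A.mulVec (w' - z') := by
      rw [dot_expand_add, dot_expand_sub, dot_symm A hA z' w']
      ring
    have hw'sum : ∑ j, w' j ^ 2 = c ^ 2 * ∑ j, w j ^ 2 := by
      rw [hw']
      simp only [Pi.smul_apply, smul_eq_mul, mul_pow]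
      rw [← Finset.mul_sum]
    have hz'sum : ∑ j, z' j ^ 2 = (c ^ 2)⁻¹ * ∑ j, z j ^ 2 := by
      rw [hz']
      simp only [Pi.smul_apply, smul_eq_mul, mul_pow]
      rw [← Finset.mul_sum, inv_pow]
    have hcw : c ^ 2 * ∑ j, w j ^ 2 = sa * sb := by
      rw [hc2, ← hsa2]
      field_simp
    have hcz : (c ^ 2)⁻¹ * ∑ j, z j ^ 2 = sa * sb := by
      rw [hc2, ← hsb2]
      field_simp
    have hQ1 := hquad (w' + z') haddS
    have hQ2 := hquad (w' - z') hsubS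
    have hsumeq : (∑ j, (w' + z') j ^ 2) + (∑ j, (w' - z') j ^ 2) = 4 * (sa * sb) := by
      have hpar : (∑ j, (w' + z') j ^ 2) + (∑ j, (w' - z') j ^ 2) =
          2 * (∑ j, w' j ^ 2) + 2 * (∑ j, z' j ^ 2) := by
        rw [← Finset.sum_add_distrib, Finset.mul_sum, Finset.mul_sum, ← Finset.sum_add_distrib]
        exact Finset.sum_congr rfl fun j _ => by simp only [Pi.add_apply, Pi.sub_apply]; ring
      rw [hpar, hw'sum, hz'sum, hcw, hcz]; ring
    have h4 : 4 * |w ⬝ᵥ A.mulVec z| ≤ 4 * (sa * sb) * M := by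
      calc 4 * |w ⬝ᵥ A.mulVec z| = |4 * (w' ⬝ᵥ A.mulVec z')| := by
            rw [heq, abs_mul]; norm_num
        _ = |(w' + z') ⬝ᵥ A.mulVec (w' + z') - (w' - z') ⬝ᵥ A.mulVec (w' - z')| := by
            rw [hpolar]
        _ ≤ |(w' + z') ⬝ᵥ A.mulVec (w' + z')| + |(w' - z') ⬝ᵥ A.mulVec (w' - z')| := abs_sub _ _
        _ ≤ (∑ j, (w' + z') j ^ 2) * M + (∑ j, (w' - z') j ^ 2) * M := add_le_add hQ1 hQ2
        _ = ((∑ j, (w' + z') j ^ 2) + (∑ j, (w' - z') j ^ 2)) * M := by ring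
        _ = 4 * (sa * sb) * M := by rw [hsumeq]
    linarith
  -- the net step
  have hstep : ∀ r ∈ QS, r ≤ K + (1/2) * M := by
    rintro r ⟨w, hw1, hwS, rfl⟩
    set x : EuclideanSpace ℝ (Fin s) := WithLp.toLp 2 (fun i => w ((S.orderIsoOfFin hScard) i)) with hx
    have hembed : embedVec p s S hScard (fun i => x i) = w := embedVec_section S hScard w hwS
    have hxsum : ∑ i, x i ^ 2 = 1 := by
      rw [← embedVec_sum_sq S hScard (fun i => x i), hembed, hw1]
    have hxnorm : ‖x‖ = 1 := (eucl_norm_one s x).mpr hxsum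
    obtain ⟨y, hyN₀, hdist⟩ := hN₀net x hxnorm
    set u : Fin p → ℝ := embedVec p s S hScard (fun i => y i) with hudef
    have huN : u ∈ N := by
      refine Finset.mem_biUnion.mpr
        ⟨S, Finset.mem_powersetCard.mpr ⟨Finset.subset_univ S, hScard⟩, ?_⟩
      rw [hF]
      simp only [hScard, dif_pos]
      exact Finset.mem_image.mpr ⟨y, hyN₀, rfl⟩
    have huK : |u ⬝ᵥ A.mulVec u| ≤ K := hKle u huN
    have hu1 : ∑ j, u j ^ 2 = 1 := by
      rw [hudef, embedVec_sum_sq]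
      exact (eucl_norm_one s y).mp (hN₀unit y hyN₀)
    have huS : ∀ j, u j ≠ 0 → j ∈ S := fun j hj => embedVec_support S hScard _ j hj
    have hdiff : w - u = embedVec p s S hScard ((fun i => x i) - (fun i => y i)) := by
      rw [embedVec_sub, hembed, hudef]
    have hdsum : ∑ j, (w - u) j ^ 2 ≤ 1/16 := by
      rw [hdiff, embedVec_sum_sq]
      exact eucl_dist_sq s x y hdist
    have hdS : ∀ j, (w - u) j ≠ 0 → j ∈ S := by
      intro j hj
      by_contra hjS
      have h1 : w j = 0 := by by_contra h; exact hjS (hwS j h)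
      have h2 : u j = 0 := by by_contra h; exact hjS (huS j h)
      exact hj (by simp [h1, h2])
    have haS : ∀ j, (w + u) j ≠ 0 → j ∈ S := by
      intro j hj
      by_contra hjS
      have h1 : w j = 0 := by by_contra h; exact hjS (hwS j h)
      have h2 : u j = 0 := by by_contra h; exact hjS (huS j h)
      exact hj (by simp [h1, h2])
    have hasum : ∑ j, (w + u) j ^ 2 ≤ 4 := by
      have hpar : (∑ j, (w + u) j ^ 2) + (∑ j, (w - u) j ^ 2) =
          2 * (∑ j, w j ^ 2) + 2 * (∑ j, u j ^ 2) := by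
        rw [← Finset.sum_add_distrib, Finset.mul_sum, Finset.mul_sum, ← Finset.sum_add_distrib]
        exact Finset.sum_congr rfl fun j _ => by simp only [Pi.add_apply, Pi.sub_apply]; ring
      have hd0 : 0 ≤ ∑ j, (w - u) j ^ 2 := Finset.sum_nonneg fun i _ => sq_nonneg _
      rw [hw1, hu1] at hpar
      linarith
    have hdecomp : w ⬝ᵥ A.mulVec w - u ⬝ᵥ A.mulVec u = (w - u) ⬝ᵥ A.mulVec (w + u) := by
      have h1 : (w - u) ⬝ᵥ A.mulVec (w + u) =
          w ⬝ᵥ A.mulVec w + w ⬝ᵥ A.mulVec u - u ⬝ᵥ A.mulVec w - u ⬝ᵥ A.mulVec u := by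
        simp [Matrix.mulVec_add, sub_dotProduct, dotProduct_add]
        ring
      rw [h1, dot_symm A hA w u]
      ring
    have hbil := hbilin (w - u) (w + u) hdS haS
    have hsd : Real.sqrt (∑ j, (w - u) j ^ 2) ≤ 1/4 := by
      calc Real.sqrt (∑ j, (w - u) j ^ 2) ≤ Real.sqrt (1/16) := Real.sqrt_le_sqrt hdsum
        _ = 1/4 := by
            rw [show (1/16 : ℝ) = (1/4)^2 by norm_num, Real.sqrt_sq (by norm_num : (0:ℝ) ≤ 1/4)]
    have hsad : Real.sqrt (∑ j, (w + u) j ^ 2) ≤ 2 := by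
      calc Real.sqrt (∑ j, (w + u) j ^ 2) ≤ Real.sqrt 4 := Real.sqrt_le_sqrt hasum
        _ = 2 := by rw [show (4:ℝ) = 2^2 by norm_num, Real.sqrt_sq (by norm_num : (0:ℝ) ≤ 2)]
    have hfin2 : |(w - u) ⬝ᵥ A.mulVec (w + u)| ≤ (1/2) * M := by
      have h1 : Real.sqrt (∑ j, (w - u) j ^ 2) * Real.sqrt (∑ j, (w + u) j ^ 2) * M ≤
          (1/4) * 2 * M := by
        have hn2 := Real.sqrt_nonneg (∑ j, (w + u) j ^ 2)
        have h2 : Real.sqrt (∑ j, (w - u) j ^ 2) * Real.sqrt (∑ j, (w + u) j ^ 2) ≤ (1/4) * 2 :=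
          mul_le_mul hsd hsad hn2 (by norm_num)
        exact mul_le_mul_of_nonneg_right h2 hM0
      calc |(w - u) ⬝ᵥ A.mulVec (w + u)|
          ≤ Real.sqrt (∑ j, (w - u) j ^ 2) * Real.sqrt (∑ j, (w + u) j ^ 2) * M := hbil
        _ ≤ (1/4) * 2 * M := h1
        _ = (1/2) * M := by ring
    calc |w ⬝ᵥ A.mulVec w| = |u ⬝ᵥ A.mulVec u + (w ⬝ᵥ A.mulVec w - u ⬝ᵥ A.mulVec u)| := by
          congr 1; ring
      _ ≤ |u ⬝ᵥ A.mulVec u| + |w ⬝ᵥ A.mulVec w - u ⬝ᵥ A.mulVec u| := abs_add_le _ _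
      _ ≤ K + (1/2) * M := by
          rw [hdecomp]
          exact add_le_add huK hfin2
  have hMK : M ≤ K + (1/2) * M := Real.sSup_le hstep (by linarith)
  have hM2K : M ≤ 2 * K := by linarith
  calc |v ⬝ᵥ A.mulVec v| ≤ M := le_csSup hQSbdd ⟨v, hv1, hvS, rfl⟩
    _ ≤ 2 * K := hM2K

end CovCP
end
end

section
/- Let A ∈ ℝ^{p×p} be symmetric and s ∈ [p]. Then sup_{Z ∈ N(p,s)} Tr(AZ) ≤ inf over symmetric Y ∈ ℝ^{p×p} of [ sup_{Z ⪰ 0, Tr(Z)=1} Tr(Z(A+Y)) + s·‖Y‖_∞ ] ≤ inf over symmetric Y ∈ ℝ^{p×p} of [ λ_max(A+Y) + s·‖Y‖_∞ ], where N(p,s) = { Z ∈ ℝ^{p×p} : Z ⪰ 0, Tr(Z) = 1, ‖Z‖₁ ≤ s }. -/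
open MeasureTheory ProbabilityTheory Real Matrix

noncomputable section

namespace CovCP

private lemma quad_bdd' {p : ℕ} (M : Matrix (Fin p) (Fin p) ℝ) :
    BddAbove {r : ℝ | ∃ v : Fin p → ℝ, (∑ j, v j ^ 2) = 1 ∧ r = v ⬝ᵥ M.mulVec v} := by
  refine ⟨∑ i, ∑ j, |M i j|, ?_⟩
  rintro r ⟨v, hv, rfl⟩
  have hvle : ∀ i, |v i| ≤ 1 := by
    intro i
    have h1 : v i ^ 2 ≤ 1 := hv ▸ Finset.single_le_sum (f := fun j => v j ^ 2)
      (fun j _ => sq_nonneg _) (Finset.mem_univ i)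
    nlinarith [abs_nonneg (v i), sq_abs (v i)]
  calc v ⬝ᵥ M.mulVec v ≤ |v ⬝ᵥ M.mulVec v| := le_abs_self _
    _ ≤ ∑ i, |v i * (M.mulVec v) i| := Finset.abs_sum_le_sum_abs _ _
    _ ≤ ∑ i, ∑ j, |M i j| := by
        refine Finset.sum_le_sum fun i _ => ?_
        rw [abs_mul]
        calc |v i| * |(M.mulVec v) i| ≤ 1 * |(M.mulVec v) i| :=
              mul_le_mul_of_nonneg_right (hvle i) (abs_nonneg _)
          _ = |∑ j, M i j * v j| := by rw [one_mul]; rfl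
          _ ≤ ∑ j, |M i j * v j| := Finset.abs_sum_le_sum_abs _ _
          _ ≤ ∑ j, |M i j| := by
              refine Finset.sum_le_sum fun j _ => ?_
              rw [abs_mul]
              exact mul_le_of_le_one_right (abs_nonneg _) (hvle j)

private lemma quad_le_lamMax {p : ℕ} (M : Matrix (Fin p) (Fin p) ℝ) (v : Fin p → ℝ)
    (hv : (∑ j, v j ^ 2) = 1) : v ⬝ᵥ M.mulVec v ≤ lamMaxSym M :=
  le_csSup (quad_bdd' M) ⟨v, hv, rfl⟩

private lemma quad_le_lamMax' {p : ℕ} (M : Matrix (Fin p) (Fin p) ℝ) (v : Fin p → ℝ) :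
    v ⬝ᵥ M.mulVec v ≤ lamMaxSym M * (∑ j, v j ^ 2) := by
  rcases eq_or_lt_of_le (Finset.sum_nonneg fun j _ => sq_nonneg (v j)) with h | h
  · have hv0 : v = 0 := by
      funext j
      have := (Finset.sum_eq_zero_iff_of_nonneg (fun j _ => sq_nonneg (v j))).mp h.symm j
        (Finset.mem_univ j)
      exact pow_eq_zero_iff (n := 2) (by norm_num) |>.mp this
    simp [hv0]
  · set c := ∑ j, v j ^ 2 with hc
    have hcs : Real.sqrt c > 0 := Real.sqrt_pos.mpr h
    set u : Fin p → ℝ := (Real.sqrt c)⁻¹ • v with hu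
    have hu1 : (∑ j, u j ^ 2) = 1 := by
      have h2 : (∑ j, u j ^ 2) = (Real.sqrt c)⁻¹ ^ 2 * c := by
        simp [hu, mul_pow, Finset.mul_sum, hc]
      rw [h2, inv_pow, Real.sq_sqrt h.le, inv_mul_cancel₀ h.ne']
    have hq : u ⬝ᵥ M.mulVec u = c⁻¹ * (v ⬝ᵥ M.mulVec v) := by
      rw [hu, smul_dotProduct, mulVec_smul, dotProduct_smul]
      have : (Real.sqrt c)⁻¹ * (Real.sqrt c)⁻¹ = c⁻¹ := by
        rw [← mul_inv, Real.mul_self_sqrt h.le]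
      simp [smul_eq_mul, ← mul_assoc, this]
    have hle := quad_le_lamMax M u hu1
    rw [hq] at hle
    calc v ⬝ᵥ M.mulVec v = c * (c⁻¹ * (v ⬝ᵥ M.mulVec v)) := by field_simp
      _ ≤ c * lamMaxSym M := mul_le_mul_of_nonneg_left hle h.le
      _ = lamMaxSym M * c := mul_comm _ _

private lemma traceMZ_le {p : ℕ} (M : Matrix (Fin p) (Fin p) ℝ)
    {Z : Matrix (Fin p) (Fin p) ℝ} (hZ : Z.PosSemidef) (htr : Z.trace = 1)
    (lam : ℝ) (hlam : ∀ v : Fin p → ℝ, v ⬝ᵥ M.mulVec v ≤ lam * (∑ j, v j ^ 2)) :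
    (M * Z).trace ≤ lam := by
  open scoped MatrixOrder in
  set S := CFC.sqrt Z with hSdef
  open scoped MatrixOrder in
  have hSS : S * S = Z := CFC.sqrt_mul_sqrt_self Z hZ.nonneg
  open scoped MatrixOrder in
  have hSsym : ∀ i j, S i j = S j i := fun i j => by
    have h := (CFC.sqrt_nonneg Z).posSemidef.1.apply j i
    simpa using h
  have h1 : (M * Z).trace = (S * (M * S)).trace := by
    rw [← hSS, ← mul_assoc, trace_mul_comm]
  have h2 : ∀ i, (S * (M * S)) i i = (fun j => S i j) ⬝ᵥ M.mulVec (fun j => S i j) := by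
    intro i
    simp only [Matrix.mul_apply, dotProduct, Matrix.mulVec, Finset.mul_sum]
    refine Finset.sum_congr rfl fun k _ => Finset.sum_congr rfl fun j _ => ?_
    rw [hSsym j i]
  have h3 : ∀ i, (∑ j, S i j ^ 2) = Z i i := by
    intro i
    rw [← hSS, Matrix.mul_apply]
    refine Finset.sum_congr rfl fun j _ => ?_
    rw [sq, hSsym i j]
  calc (M * Z).trace = ∑ i, (S * (M * S)) i i := by rw [h1]; rfl
    _ ≤ ∑ i, lam * Z i i := by
        refine Finset.sum_le_sum fun i _ => ?_
        rw [h2 i]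
        calc _ ≤ lam * (∑ j, S i j ^ 2) := hlam _
          _ = lam * Z i i := by rw [h3 i]
    _ = lam * Z.trace := by rw [← Finset.mul_sum]; rfl
    _ = lam := by rw [htr, mul_one]

private lemma sdp_witness {p : ℕ} (hp : 0 < p) (s : ℕ) (hs : 1 ≤ s)
    (M : Matrix (Fin p) (Fin p) ℝ) :
    ∃ Z : Matrix (Fin p) (Fin p) ℝ, Z.PosSemidef ∧ Z.trace = 1 ∧
      (∑ i, ∑ j, |Z i j|) ≤ (s : ℝ) ∧ (M * Z).trace = M ⟨0, hp⟩ ⟨0, hp⟩ := by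
  set i0 : Fin p := ⟨0, hp⟩
  set d : Fin p → ℝ := Pi.single i0 1 with hd
  refine ⟨Matrix.diagonal d, Matrix.PosSemidef.diagonal ?_, ?_, ?_, ?_⟩
  · intro j
    rw [hd, Pi.single_apply]
    positivity
  · rw [Matrix.trace_diagonal, hd]
    simp
  · have habs : ∀ i j, |Matrix.diagonal d i j| = if i = j then d i else 0 := by
      intro i j
      rw [Matrix.diagonal_apply]
      split
      · rw [abs_of_nonneg]; rw [hd, Pi.single_apply]; positivity
      · exact abs_zero
    calc (∑ i, ∑ j, |Matrix.diagonal d i j|) = ∑ i, d i := by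
          refine Finset.sum_congr rfl fun i _ => ?_
          simp only [habs, Finset.sum_ite_eq, Finset.mem_univ, if_true]
      _ = 1 := by rw [hd]; simp
      _ ≤ (s : ℝ) := by exact_mod_cast hs
  · have hdg : ∀ i, (M * Matrix.diagonal d) i i = M i i * d i := fun i =>
      Matrix.mul_diagonal d M i i
    calc (M * Matrix.diagonal d).trace = ∑ i, M i i * d i :=
          Finset.sum_congr rfl fun i _ => hdg i
      _ = M i0 i0 := by
          rw [hd]
          simp only [Pi.single_apply, mul_ite, mul_one, mul_zero, Finset.sum_ite_eq',
            Finset.mem_univ, if_true]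

/-- weak duality for the SDP relaxation of the sparse eigenvalue
problem (Lemma 11 of the paper). -/
theorem sdp_duality (p s : ℕ) (hs : 1 ≤ s) (hsp : s ≤ p)
    (A : Matrix (Fin p) (Fin p) ℝ) (hA : A.IsSymm) :
    (sSup {r : ℝ | ∃ Z : Matrix (Fin p) (Fin p) ℝ, Z.PosSemidef ∧ Z.trace = 1 ∧
        (∑ i, ∑ j, abs (Z i j)) ≤ (s : ℝ) ∧ r = (A * Z).trace} ≤
      ⨅ Y : {Y : Matrix (Fin p) (Fin p) ℝ // Y.IsSymm},
        (sSup {r : ℝ | ∃ Z : Matrix (Fin p) (Fin p) ℝ, Z.PosSemidef ∧ Z.trace = 1 ∧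
            r = ((A + Y.1) * Z).trace} + (s : ℝ) * ⨆ i, ⨆ j, abs (Y.1 i j))) ∧
    ((⨅ Y : {Y : Matrix (Fin p) (Fin p) ℝ // Y.IsSymm},
        (sSup {r : ℝ | ∃ Z : Matrix (Fin p) (Fin p) ℝ, Z.PosSemidef ∧ Z.trace = 1 ∧
            r = ((A + Y.1) * Z).trace} + (s : ℝ) * ⨆ i, ⨆ j, abs (Y.1 i j))) ≤
      ⨅ Y : {Y : Matrix (Fin p) (Fin p) ℝ // Y.IsSymm},
        (lamMaxSym (A + Y.1) + (s : ℝ) * ⨆ i, ⨆ j, abs (Y.1 i j))) := by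
  have hp : 0 < p := lt_of_lt_of_le hs hsp
  set i0 : Fin p := ⟨0, hp⟩ with hi0
  haveI : Nonempty {Y : Matrix (Fin p) (Fin p) ℝ // Y.IsSymm} := ⟨⟨0, Matrix.isSymm_zero⟩⟩
  have hs' : (1 : ℝ) ≤ (s : ℝ) := by exact_mod_cast hs
  -- facts about the sup-norm
  have hCub : ∀ (Y : Matrix (Fin p) (Fin p) ℝ) (i j : Fin p),
      |Y i j| ≤ ⨆ i, ⨆ j, |Y i j| := by
    intro Y i j
    calc |Y i j| ≤ ⨆ j, |Y i j| :=
          le_ciSup (f := fun j => |Y i j|) (Set.Finite.bddAbove (Set.finite_range _)) j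
      _ ≤ ⨆ i, ⨆ j, |Y i j| :=
          le_ciSup (f := fun i => ⨆ j, |Y i j|) (Set.Finite.bddAbove (Set.finite_range _)) i
  have hC0 : ∀ Y : Matrix (Fin p) (Fin p) ℝ, 0 ≤ ⨆ i, ⨆ j, |Y i j| :=
    fun Y => (abs_nonneg _).trans (hCub Y i0 i0)
  -- bound on |Tr(YZ)|
  have hYZ : ∀ Y Z : Matrix (Fin p) (Fin p) ℝ, (∑ i, ∑ j, |Z i j|) ≤ (s : ℝ) →
      |(Y * Z).trace| ≤ (s : ℝ) * ⨆ i, ⨆ j, |Y i j| := by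
    intro Y Z hZ1
    have hexp : (Y * Z).trace = ∑ i, ∑ j, Y i j * Z j i := by
      refine Finset.sum_congr rfl fun i _ => ?_
      rfl
    rw [hexp]
    calc |∑ i, ∑ j, Y i j * Z j i| ≤ ∑ i, |∑ j, Y i j * Z j i| :=
          Finset.abs_sum_le_sum_abs _ _
      _ ≤ ∑ i, ∑ j, |Y i j * Z j i| :=
          Finset.sum_le_sum fun i _ => Finset.abs_sum_le_sum_abs _ _
      _ ≤ ∑ i, ∑ j, (⨆ i, ⨆ j, |Y i j|) * |Z j i| := by
          refine Finset.sum_le_sum fun i _ => Finset.sum_le_sum fun j _ => ?_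
          rw [abs_mul]
          exact mul_le_mul_of_nonneg_right (hCub Y i j) (abs_nonneg _)
      _ = (⨆ i, ⨆ j, |Y i j|) * ∑ i, ∑ j, |Z j i| := by
          simp only [← Finset.mul_sum]
      _ = (⨆ i, ⨆ j, |Y i j|) * ∑ i, ∑ j, |Z i j| := by rw [Finset.sum_comm]
      _ ≤ (⨆ i, ⨆ j, |Y i j|) * (s : ℝ) := mul_le_mul_of_nonneg_left hZ1 (hC0 Y)
      _ = (s : ℝ) * ⨆ i, ⨆ j, |Y i j| := mul_comm _ _
  -- boundedness of the inner sup set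
  have hInnerUB : ∀ M : Matrix (Fin p) (Fin p) ℝ, ∀ r ∈ {r : ℝ |
      ∃ Z : Matrix (Fin p) (Fin p) ℝ, Z.PosSemidef ∧ Z.trace = 1 ∧ r = (M * Z).trace},
      r ≤ lamMaxSym M := by
    rintro M r ⟨Z, hZ, htr, rfl⟩
    exact traceMZ_le M hZ htr _ (quad_le_lamMax' M)
  have hInnerBdd : ∀ M : Matrix (Fin p) (Fin p) ℝ, BddAbove {r : ℝ |
      ∃ Z : Matrix (Fin p) (Fin p) ℝ, Z.PosSemidef ∧ Z.trace = 1 ∧ r = (M * Z).trace} :=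
    fun M => ⟨lamMaxSym M, hInnerUB M⟩
  constructor
  · -- first inequality
    obtain ⟨Zw, hw1, hw2, hw3, -⟩ := sdp_witness hp s hs A
    refine csSup_le ⟨(A * Zw).trace, Zw, hw1, hw2, hw3, rfl⟩ ?_
    rintro r ⟨Z, hZ, htr, hZ1, rfl⟩
    refine le_ciInf fun Y => ?_
    have key : ((A + Y.1) * Z).trace ≤ sSup {r : ℝ |
        ∃ Z : Matrix (Fin p) (Fin p) ℝ, Z.PosSemidef ∧ Z.trace = 1 ∧
          r = ((A + Y.1) * Z).trace} :=
      le_csSup (hInnerBdd _) ⟨Z, hZ, htr, rfl⟩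
    have hsplit : (A * Z).trace = ((A + Y.1) * Z).trace - (Y.1 * Z).trace := by
      rw [add_mul, Matrix.trace_add]
      ring
    have habs := hYZ Y.1 Z hZ1
    have hneg := neg_abs_le ((Y.1 * Z).trace)
    rw [hsplit]
    linarith
  · -- second inequality
    refine ciInf_mono ?_ fun Y => ?_
    · refine ⟨A i0 i0, ?_⟩
      rintro x ⟨Y, rfl⟩
      obtain ⟨Zw, hw1, hw2, hw3, hw4⟩ := sdp_witness hp s hs (A + Y.1)
      have h1 : (A + Y.1) i0 i0 ≤ sSup {r : ℝ |
          ∃ Z : Matrix (Fin p) (Fin p) ℝ, Z.PosSemidef ∧ Z.trace = 1 ∧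
            r = ((A + Y.1) * Z).trace} :=
        le_csSup (hInnerBdd _) ⟨Zw, hw1, hw2, hw4.symm⟩
      have h2 : |Y.1 i0 i0| ≤ ⨆ i, ⨆ j, |Y.1 i j| := hCub Y.1 i0 i0
      have h3 : (⨆ i, ⨆ j, |Y.1 i j|) ≤ (s : ℝ) * ⨆ i, ⨆ j, |Y.1 i j| :=
        le_mul_of_one_le_left (hC0 Y.1) hs'
      have h4 : (A + Y.1) i0 i0 = A i0 i0 + Y.1 i0 i0 := Matrix.add_apply A Y.1 i0 i0
      have hneg := neg_abs_le (Y.1 i0 i0)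
      simp only []
      linarith
    · obtain ⟨Zw, hw1, hw2, -, -⟩ := sdp_witness hp s hs (A + Y.1)
      have hss : sSup {r : ℝ | ∃ Z : Matrix (Fin p) (Fin p) ℝ, Z.PosSemidef ∧ Z.trace = 1 ∧
          r = ((A + Y.1) * Z).trace} ≤ lamMaxSym (A + Y.1) :=
        csSup_le ⟨((A + Y.1) * Zw).trace, Zw, hw1, hw2, rfl⟩ (hInnerUB (A + Y.1))
      exact add_le_add_left hss _

end CovCP
end
end

section
/- Let Σ ∈ ℝ^{p×p} be symmetric positive definite. Then: (i) the map s ↦ λ_max^s(Σ) is non-decreasing in s ∈ [p]; (ii) for any s, s0 with s0/2 ≤ s ≤ s0 ≤ p, λ_max^{s0}(Σ) ≤ 4·λ_max^s(Σ); and (iii) if Σ1, Σ2 ∈ ℝ^{p×p} are both symmetric positive definite, then for any s ∈ [p], λ_max^s(Σ1 − Σ2) ≤ max(λ_max^s(Σ1), λ_max^s(Σ2)). -/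
open MeasureTheory ProbabilityTheory Real Matrix

noncomputable section

namespace CovCP

/-- The set whose supremum defines `sparseEig`. -/
def sparseEigSet {p : ℕ} (s : ℕ) (A : Matrix (Fin p) (Fin p) ℝ) : Set ℝ :=
  {r : ℝ | ∃ v : Fin p → ℝ, (∑ j, v j ^ 2) = 1 ∧ {j | v j ≠ 0}.ncard ≤ s ∧
    r = abs (v ⬝ᵥ A.mulVec v)}

lemma sparseEig_eq_sSup {p : ℕ} (s : ℕ) (A : Matrix (Fin p) (Fin p) ℝ) :
    sparseEig s A = sSup (sparseEigSet s A) := rfl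

lemma abs_le_one_of_sum_sq {p : ℕ} {v : Fin p → ℝ} (hv : (∑ j, v j ^ 2) = 1)
    (i : Fin p) : |v i| ≤ 1 := by
  have h : v i ^ 2 ≤ 1 := by
    rw [← hv]
    exact Finset.single_le_sum (fun j _ => sq_nonneg (v j)) (Finset.mem_univ i)
  nlinarith [abs_nonneg (v i), sq_abs (v i)]

lemma sparseEigSet_bddAbove {p : ℕ} (s : ℕ) (A : Matrix (Fin p) (Fin p) ℝ) :
    BddAbove (sparseEigSet s A) := by
  refine ⟨∑ i, ∑ j, |A i j|, ?_⟩
  rintro r ⟨v, hv, -, rfl⟩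
  have hmv : ∀ i, |(A.mulVec v) i| ≤ ∑ j, |A i j| := by
    intro i
    have : (A.mulVec v) i = ∑ j, A i j * v j := by
      simp [Matrix.mulVec, dotProduct]
    rw [this]
    calc |∑ j, A i j * v j| ≤ ∑ j, |A i j * v j| := Finset.abs_sum_le_sum_abs _ _
      _ ≤ ∑ j, |A i j| := Finset.sum_le_sum fun j _ => by
          rw [abs_mul]
          nlinarith [abs_le_one_of_sum_sq hv j, abs_nonneg (A i j), abs_nonneg (v j)]
  calc |v ⬝ᵥ A.mulVec v| ≤ ∑ i, |v i * (A.mulVec v) i| := Finset.abs_sum_le_sum_abs _ _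
    _ ≤ ∑ i, ∑ j, |A i j| := Finset.sum_le_sum fun i _ => by
        rw [abs_mul]
        calc |v i| * |(A.mulVec v) i| ≤ 1 * (∑ j, |A i j|) :=
              mul_le_mul (abs_le_one_of_sum_sq hv i) (hmv i) (abs_nonneg _)
                zero_le_one
          _ = ∑ j, |A i j| := one_mul _

lemma sparseEigSet_nonempty {p s : ℕ} (hp : 0 < p) (hs : 1 ≤ s)
    (A : Matrix (Fin p) (Fin p) ℝ) : (sparseEigSet s A).Nonempty := by
  classical
  set e : Fin p → ℝ := fun j => if j = ⟨0, hp⟩ then 1 else 0 with hedef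
  refine ⟨|e ⬝ᵥ A.mulVec e|, e, ?_, ?_, rfl⟩
  · simp [hedef, sq, ite_pow, Finset.sum_ite_eq']
  · have h : {j | e j ≠ 0} = ({(⟨0, hp⟩ : Fin p)} : Set (Fin p)) := by
      ext j
      by_cases hj : j = ⟨0, hp⟩ <;> simp [hedef, hj]
    rw [h, Set.ncard_singleton]
    exact hs

lemma sparseEig_nonneg {p s : ℕ} (hp : 0 < p) (hs : 1 ≤ s)
    (A : Matrix (Fin p) (Fin p) ℝ) : 0 ≤ sparseEig s A := by
  obtain ⟨r, v, hv, hc, rfl⟩ := sparseEigSet_nonempty hp hs A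
  exact le_trans (abs_nonneg _)
    (le_csSup (sparseEigSet_bddAbove s A) ⟨v, hv, hc, rfl⟩)

/-- Key estimate: quadratic form of an `s`-sparse vector is bounded by
`sparseEig s A` times its squared norm. -/
lemma abs_quad_le {p s : ℕ} (hp : 0 < p) (hs : 1 ≤ s)
    (A : Matrix (Fin p) (Fin p) ℝ) (v : Fin p → ℝ)
    (hc : {j | v j ≠ 0}.ncard ≤ s) :
    |v ⬝ᵥ A.mulVec v| ≤ sparseEig s A * (∑ j, v j ^ 2) := by
  by_cases h0 : (∑ j, v j ^ 2) = 0
  · have hz : ∀ j, v j = 0 := by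
      intro j
      have := (Finset.sum_eq_zero_iff_of_nonneg
        (fun j _ => sq_nonneg (v j))).mp h0 j (Finset.mem_univ j)
      exact pow_eq_zero_iff (by norm_num) |>.mp this
    have : v = 0 := funext hz
    simp [this, h0]
  · have hpos : 0 < ∑ j, v j ^ 2 :=
      lt_of_le_of_ne (Finset.sum_nonneg fun j _ => sq_nonneg (v j)) (Ne.symm h0)
    set c : ℝ := Real.sqrt (∑ j, v j ^ 2) with hcdef
    have hcpos : 0 < c := Real.sqrt_pos.mpr hpos
    have hc2 : c ^ 2 = ∑ j, v j ^ 2 := Real.sq_sqrt hpos.le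
    set u : Fin p → ℝ := fun j => v j / c with hudef
    have hu1 : (∑ j, u j ^ 2) = 1 := by
      simp only [hudef, div_pow]
      rw [← Finset.sum_div, ← hc2, div_self (by positivity)]
    have husupp : {j | u j ≠ 0} = {j | v j ≠ 0} := by
      ext j; simp [hudef, div_eq_zero_iff, hcpos.ne']
    have hmem : |u ⬝ᵥ A.mulVec u| ∈ sparseEigSet s A :=
      ⟨u, hu1, by rw [husupp]; exact hc, rfl⟩
    have hle : |u ⬝ᵥ A.mulVec u| ≤ sparseEig s A :=
      le_csSup (sparseEigSet_bddAbove s A) hmem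
    have hscale : v ⬝ᵥ A.mulVec v = c ^ 2 * (u ⬝ᵥ A.mulVec u) := by
      have hv : v = c • u := by
        funext j; simp [hudef, smul_eq_mul, mul_div_cancel₀ _ hcpos.ne']
      rw [hv, Matrix.mulVec_smul, smul_dotProduct, dotProduct_smul]
      simp only [smul_eq_mul]
      ring
    rw [hscale, abs_mul, abs_of_pos (by positivity : (0:ℝ) < c ^ 2), hc2]
    rw [mul_comm]
    exact mul_le_mul_of_nonneg_right hle hpos.le

/-- Quadratic form of a matrix difference splits. -/
lemma quad_sub {p : ℕ} (M1 M2 : Matrix (Fin p) (Fin p) ℝ) (v : Fin p → ℝ) :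
    v ⬝ᵥ (M1 - M2).mulVec v = v ⬝ᵥ M1.mulVec v - v ⬝ᵥ M2.mulVec v := by
  rw [Matrix.sub_mulVec, dotProduct_sub]

/-- elementary properties of sparse eigenvalues
(Lemma 12 of the paper). -/
theorem sparse_eig_properties (p : ℕ) :
    (∀ M0 : Matrix (Fin p) (Fin p) ℝ, M0.PosDef →
      ∀ s s' : ℕ, 1 ≤ s → s ≤ s' → s' ≤ p → sparseEig s M0 ≤ sparseEig s' M0) ∧
    (∀ M0 : Matrix (Fin p) (Fin p) ℝ, M0.PosDef →
      ∀ s s0 : ℕ, 1 ≤ s → (s0 : ℝ) / 2 ≤ (s : ℝ) → s ≤ s0 → s0 ≤ p →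
        sparseEig s0 M0 ≤ 4 * sparseEig s M0) ∧
    (∀ M1 M2 : Matrix (Fin p) (Fin p) ℝ, M1.PosDef → M2.PosDef →
      ∀ s : ℕ, 1 ≤ s → s ≤ p →
        sparseEig s (M1 - M2) ≤ max (sparseEig s M1) (sparseEig s M2)) := by
  refine ⟨?_, ?_, ?_⟩
  · -- (i) monotonicity
    intro M0 _ s s' hs hss' hsp
    have hp : 0 < p := lt_of_lt_of_le (lt_of_lt_of_le hs hss') hsp
    exact csSup_le_csSup (sparseEigSet_bddAbove s' M0)
      (sparseEigSet_nonempty hp hs M0)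
      (fun r ⟨v, hv, hc, hr⟩ => ⟨v, hv, le_trans hc hss', hr⟩)
  · -- (ii) doubling
    intro M0 hM0 s s0 hs hhalf hss0 hs0p
    have hp : 0 < p := lt_of_lt_of_le (lt_of_lt_of_le hs hss0) hs0p
    have hs0 : 1 ≤ s0 := le_trans hs hss0
    set lam := sparseEig s M0 with hlam
    have hlam0 : 0 ≤ lam := sparseEig_nonneg hp hs M0
    refine csSup_le (sparseEigSet_nonempty hp hs0 M0) ?_
    rintro r ⟨v, hv, hvc, rfl⟩
    -- split the support of `v` into two pieces of size ≤ s
    have hs02 : s0 ≤ 2 * s := by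
      have : (s0 : ℝ) ≤ 2 * s := by linarith
      exact_mod_cast this
    have hfin : {j | v j ≠ 0}.Finite := Set.toFinite _
    set T : Finset (Fin p) := hfin.toFinset with hTdef
    have hTcard : T.card ≤ s0 := by
      rwa [← Set.ncard_eq_toFinset_card _ hfin]
    obtain ⟨T1, hT1sub, hT1card⟩ := Finset.exists_subset_card_eq
      (min_le_right s T.card)
    set T2 : Finset (Fin p) := T \ T1 with hT2def
    have hT2card : T2.card = T.card - T1.card := Finset.card_sdiff_of_subset hT1sub
    have hT1le : T1.card ≤ s := by omega
    have hT2le : T2.card ≤ s := by omega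
    classical
    set v1 : Fin p → ℝ := fun j => if j ∈ T1 then v j else 0 with hv1def
    set v2 : Fin p → ℝ := fun j => if j ∈ T2 then v j else 0 with hv2def
    have hsplit : ∀ j, v j = v1 j + v2 j := by
      intro j
      by_cases h1 : j ∈ T1
      · have h2 : j ∉ T2 := by simp [hT2def, Finset.mem_sdiff, h1]
        simp [hv1def, hv2def, h1, h2]
      · by_cases h2 : j ∈ T2
        · simp [hv1def, hv2def, h1, h2]
        · have hT : j ∉ T := fun hT => h2 (Finset.mem_sdiff.mpr ⟨hT, h1⟩)
          have hvj : v j = 0 := by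
            by_contra h
            exact hT (hfin.mem_toFinset.mpr h)
          simp [hv1def, hv2def, h1, h2, hvj]
    have hsupp1 : {j | v1 j ≠ 0}.ncard ≤ s := by
      have hsub : {j | v1 j ≠ 0} ⊆ ↑T1 := by
        intro j hj
        by_contra h
        apply hj
        show (if j ∈ T1 then v j else 0) = 0
        rw [if_neg (fun hh => h (Finset.mem_coe.mpr hh))]
      calc {j | v1 j ≠ 0}.ncard ≤ (↑T1 : Set (Fin p)).ncard :=
            Set.ncard_le_ncard hsub T1.finite_toSet
        _ = T1.card := Set.ncard_coe_finset T1
        _ ≤ s := hT1le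
    have hsupp2 : {j | v2 j ≠ 0}.ncard ≤ s := by
      have hsub : {j | v2 j ≠ 0} ⊆ ↑T2 := by
        intro j hj
        by_contra h
        apply hj
        show (if j ∈ T2 then v j else 0) = 0
        rw [if_neg (fun hh => h (Finset.mem_coe.mpr hh))]
      calc {j | v2 j ≠ 0}.ncard ≤ (↑T2 : Set (Fin p)).ncard :=
            Set.ncard_le_ncard hsub T2.finite_toSet
        _ = T2.card := Set.ncard_coe_finset T2
        _ ≤ s := hT2le
    have hprod : ∀ j, v1 j * v2 j = 0 := by
      intro j
      by_cases h1 : j ∈ T1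
      · have h2 : j ∉ T2 := by simp [hT2def, Finset.mem_sdiff, h1]
        simp [hv2def, h2]
      · simp [hv1def, h1]
    set n1 := ∑ j, v1 j ^ 2 with hn1def
    set n2 := ∑ j, v2 j ^ 2 with hn2def
    have hn1nn : 0 ≤ n1 := Finset.sum_nonneg fun j _ => sq_nonneg _
    have hn2nn : 0 ≤ n2 := Finset.sum_nonneg fun j _ => sq_nonneg _
    have hnsum : n1 + n2 = 1 := by
      rw [hn1def, hn2def, ← Finset.sum_add_distrib, ← hv]
      refine Finset.sum_congr rfl fun j _ => ?_
      rw [hsplit j]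
      nlinarith [hprod j]
    set a := v1 ⬝ᵥ M0.mulVec v1 with hadef
    set c := v2 ⬝ᵥ M0.mulVec v2 with hcdef
    set d := v1 ⬝ᵥ M0.mulVec v2 + v2 ⬝ᵥ M0.mulVec v1 with hddef
    have hpsd := hM0.posSemidef
    have hquad : ∀ t : ℝ, 0 ≤ c * (t * t) + d * t + a := by
      intro t
      have h0 := hpsd.dotProduct_mulVec_nonneg (v1 + t • v2)
      have hst : star (v1 + t • v2) = v1 + t • v2 := by
        simp
      rw [hst] at h0
      have hexp : (v1 + t • v2) ⬝ᵥ M0.mulVec (v1 + t • v2) =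
          c * (t * t) + d * t + a := by
        simp only [Matrix.mulVec_add, Matrix.mulVec_smul, add_dotProduct,
          dotProduct_add, smul_dotProduct, dotProduct_smul,
          smul_eq_mul]
        ring
      rw [hexp] at h0
      exact h0
    have hdisc : d ^ 2 ≤ 4 * (c * a) := by
      have := discrim_le_zero hquad
      rw [discrim] at this
      nlinarith [this]
    have ha : 0 ≤ a := by
      have h0 := hpsd.dotProduct_mulVec_nonneg v1
      simpa using h0
    have hc : 0 ≤ c := by
      have h0 := hpsd.dotProduct_mulVec_nonneg v2
      simpa using h0
    have haup : a ≤ lam * n1 :=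
      le_trans (le_abs_self _) (abs_quad_le hp hs M0 v1 hsupp1)
    have hcup : c ≤ lam * n2 :=
      le_trans (le_abs_self _) (abs_quad_le hp hs M0 v2 hsupp2)
    have hQv : v ⬝ᵥ M0.mulVec v = a + d + c := by
      have hveq : v = v1 + v2 := funext hsplit
      rw [hveq, Matrix.mulVec_add, add_dotProduct, dotProduct_add,
        dotProduct_add]
      simp only [hadef, hcdef, hddef]
      ring
    have hQnn : 0 ≤ v ⬝ᵥ M0.mulVec v := by
      have h0 := hpsd.dotProduct_mulVec_nonneg v
      simpa using h0
    rw [abs_of_nonneg hQnn, hQv]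
    have hdac : d ≤ a + c := by
      nlinarith [sq_nonneg (a - c), sq_nonneg (a + c - d)]
    have hlamsum : lam * n1 + lam * n2 = lam := by
      rw [← mul_add, hnsum, mul_one]
    linarith
  · -- (iii) difference bound
    intro M1 M2 hM1 hM2 s hs hsp
    have hp : 0 < p := lt_of_lt_of_le hs hsp
    refine csSup_le (sparseEigSet_nonempty hp hs (M1 - M2)) ?_
    rintro r ⟨v, hv, hc, rfl⟩
    have h1 : 0 ≤ v ⬝ᵥ M1.mulVec v := by
      have h0 := hM1.posSemidef.dotProduct_mulVec_nonneg v
      simpa using h0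
    have h2 : 0 ≤ v ⬝ᵥ M2.mulVec v := by
      have h0 := hM2.posSemidef.dotProduct_mulVec_nonneg v
      simpa using h0
    have h1' : v ⬝ᵥ M1.mulVec v ≤ sparseEig s M1 := by
      have := abs_quad_le hp hs M1 v hc
      rw [hv, mul_one] at this
      exact le_trans (le_abs_self _) this
    have h2' : v ⬝ᵥ M2.mulVec v ≤ sparseEig s M2 := by
      have := abs_quad_le hp hs M2 v hc
      rw [hv, mul_one] at this
      exact le_trans (le_abs_self _) this
    rw [quad_sub]
    rw [abs_le]
    constructor
    · have := le_max_right (sparseEig s M1) (sparseEig s M2)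
      linarith
    · have := le_max_left (sparseEig s M1) (sparseEig s M2)
      linarith

end CovCP
end
end
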